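/- Let φ : ℕ → Option ℕ be injective with φ(i) ≠ none for every i (modeling an injective base point preserving map f), and take the constant weight w ≡ 1. If λ ∈ ℂ with λ ≠ 0 is an eigenvalue of T_{1,φ} on ℓ¹, then λ admits an eigenvector with finite support, and λ is a root of unity: there exists n ≥ 1 with λ^n = 1. -/

import Mathlib

/-- Let `φ : ℕ → Option ℕ` be injective with `φ(i) ≠ none` for every `i`, and let `T` be the
shift-type operator on `ℓ¹` determined by `φ` and the constant weight `w ≡ 1` (i.e.
`(T a)(j) = Σ_{i : φ(i) = some j} a(i)`). If `λ ≠ 0` is an eigenvalue of `T`, then `λ` admits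
an eigenvector with finite support, and `λ` is a root of unity: `λ^n = 1` for some `n ≥ 1`. -/
theorem stmt17 (φ : ℕ → Option ℕ) (hφinj : Function.Injective φ)
    (hφ : ∀ i : ℕ, φ i ≠ none)
    (T : lp (fun _ : ℕ => ℂ) 1 →L[ℂ] lp (fun _ : ℕ => ℂ) 1)
    (hT : ∀ (a : lp (fun _ : ℕ => ℂ) 1) (j : ℕ),
      T a j = ∑' i : {i : ℕ // φ i = some j}, a i)
    (lam : ℂ) (hlam : lam ≠ 0)
    (heigen : ∃ a : lp (fun _ : ℕ => ℂ) 1, a ≠ 0 ∧ T a = lam • a) :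
    (∃ a : lp (fun _ : ℕ => ℂ) 1, a ≠ 0 ∧ T a = lam • a ∧ {i : ℕ | a i ≠ 0}.Finite) ∧
      ∃ n : ℕ, 1 ≤ n ∧ lam ^ n = 1 := by
  set f : ℕ → ℕ := fun i => (φ i).get (Option.isSome_iff_ne_none.mpr (hφ i)) with hfdef
  have hf : ∀ i, φ i = some (f i) := fun i => (Option.some_get _).symm
  have hfinj : Function.Injective f := by
    intro i j hij
    exact hφinj (by rw [hf i, hf j, hij])
  have keyA : ∀ (a : lp (fun _ : ℕ => ℂ) 1) (i : ℕ), T a (f i) = a i := by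
    intro a i
    rw [hT]
    exact tsum_eq_single (⟨i, hf i⟩ : {i' : ℕ // φ i' = some (f i)})
      (fun b hb => absurd (Subtype.ext (hφinj (b.2.trans (hf i).symm))) hb)
  have keyB : ∀ (a : lp (fun _ : ℕ => ℂ) 1) (j : ℕ), j ∉ Set.range f → T a j = 0 := by
    intro a j hj
    rw [hT]
    haveI : IsEmpty {i : ℕ // φ i = some j} := by
      constructor; rintro ⟨i, hi⟩
      exact hj ⟨i, Option.some_injective _ ((hf i).symm.trans hi)⟩
    exact tsum_empty
  obtain ⟨a, ha0, haeig⟩ := heigen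
  -- eigen equations
  have E1 : ∀ i, a i = lam * a (f i) := by
    intro i
    have := congrFun (congrArg (fun x : lp (fun _ : ℕ => ℂ) 1 => (x : ∀ _ : ℕ, ℂ)) haeig) (f i)
    simp only [lp.coeFn_smul, Pi.smul_apply, smul_eq_mul] at this
    rw [keyA] at this
    exact this
  have E2 : ∀ j, j ∉ Set.range f → a j = 0 := by
    intro j hj
    have := congrFun (congrArg (fun x : lp (fun _ : ℕ => ℂ) 1 => (x : ∀ _ : ℕ, ℂ)) haeig) j
    simp only [lp.coeFn_smul, Pi.smul_apply, smul_eq_mul] at this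
    rw [keyB a j hj] at this
    exact (mul_eq_zero.mp this.symm).resolve_left hlam
  have E1n : ∀ k i, a i = lam ^ k * a (f^[k] i) := by
    intro k
    induction k with
    | zero => simp
    | succ k ih =>
      intro i
      rw [ih i, E1 (f^[k] i), Function.iterate_succ_apply', pow_succ]
      ring
  -- nonzero coordinate
  have hex : ∃ i, a i ≠ 0 := by
    by_contra h
    push_neg at h
    exact ha0 (lp.eq_zero_iff_coeFn_eq_zero.mpr (funext h))
  obtain ⟨i₀, hi₀⟩ := hex
  -- backward chain g
  have hback : ∀ i, a i ≠ 0 → ∃ i', f i' = i ∧ a i' = lam * a i := by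
    intro i hi
    rcases Classical.em (i ∈ Set.range f) with ⟨i', rfl⟩ | h
    · exact ⟨i', rfl, E1 i'⟩
    · exact absurd (E2 i h) hi
  have hchain : ∀ k, ∃ i, f^[k] i = i₀ ∧ a i = lam ^ k * a i₀ := by
    intro k
    induction k with
    | zero => exact ⟨i₀, rfl, by simp⟩
    | succ k ih =>
      obtain ⟨i, hfi, hai⟩ := ih
      have hine : a i ≠ 0 := by
        rw [hai]; exact mul_ne_zero (pow_ne_zero _ hlam) hi₀
      obtain ⟨i', hfi', hai'⟩ := hback i hine
      refine ⟨i', ?_, ?_⟩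
      · rw [Function.iterate_succ_apply, hfi', hfi]
      · rw [hai', hai, pow_succ]; ring
  choose g hg1 hg2 using hchain
  -- bounds
  have hbound : ∀ j, ‖a j‖ ≤ ‖a‖ := fun j => lp.norm_apply_le_norm one_ne_zero a j
  -- main dichotomy: there's a cycle through i₀
  have hcycle : ∃ n, 1 ≤ n ∧ f^[n] i₀ = i₀ := by
    by_contra hnc
    push_neg at hnc
    -- g is injective
    have hkey : ∀ k m, k < m → g k ≠ g m := by
      intro k m hlt hkm
      have h1 : f^[m] (g m) = i₀ := hg1 m
      have h2 : f^[m] (g k) = i₀ := by rw [hkm]; exact h1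
      have h3 : f^[m - k] i₀ = i₀ := by
        have h4 : f^[m - k] (f^[k] (g k)) = i₀ := by
          rw [← Function.iterate_add_apply]
          rw [show m - k + k = m by omega]
          exact h2
        rwa [hg1 k] at h4
      exact hnc (m - k) (by omega) h3
    have hginj : Function.Injective g := by
      intro k m hkm
      rcases Nat.lt_trichotomy k m with h | h | h
      · exact absurd hkm (hkey k m h)
      · exact h
      · exact absurd hkm.symm (hkey m k h)
    -- summability gives ‖lam‖ < 1
    have hsum : Summable (fun i => ‖a i‖) := by
      have := (lp.memℓp a).summable (by norm_num : (0:ℝ) < (1 : ENNReal).toReal)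
      simpa using this
    have hsumg : Summable (fun k => ‖a (g k)‖) := hsum.comp_injective hginj
    have heq : ∀ k, ‖a (g k)‖ = ‖lam‖ ^ k * ‖a i₀‖ := by
      intro k; rw [hg2 k]; simp [norm_mul, norm_pow]
    rw [funext heq] at hsumg
    have hsumgeo : Summable (fun k : ℕ => ‖lam‖ ^ k) :=
      (summable_mul_right_iff (by simpa using hi₀)).mp hsumg
    have hlt : ‖lam‖ < 1 := by
      have := summable_geometric_iff_norm_lt_one.mp hsumgeo
      rwa [Real.norm_eq_abs, abs_of_nonneg (norm_nonneg lam)] at this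
    -- forward orbit blows up
    have hub : ∀ k, ‖a i₀‖ ≤ ‖lam‖ ^ k * ‖a‖ := by
      intro k
      calc ‖a i₀‖ = ‖lam‖ ^ k * ‖a (f^[k] i₀)‖ := by
            rw [E1n k i₀]; simp [norm_mul, norm_pow]
        _ ≤ ‖lam‖ ^ k * ‖a‖ := by
            apply mul_le_mul_of_nonneg_left (hbound _) (by positivity)
    have htend : Filter.Tendsto (fun k : ℕ => ‖lam‖ ^ k * ‖a‖) Filter.atTop (nhds 0) := by
      rw [show (0:ℝ) = 0 * ‖a‖ by ring]
      exact (tendsto_pow_atTop_nhds_zero_of_lt_one (norm_nonneg _) hlt).mul_const _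
    have : ‖a i₀‖ ≤ 0 := le_of_tendsto_of_tendsto' tendsto_const_nhds htend hub
    exact absurd (le_antisymm this (norm_nonneg _)) (by simpa using hi₀)
  obtain ⟨n, hn1, hcyc⟩ := hcycle
  have hroot : lam ^ n = 1 := by
    have := E1n n i₀
    rw [hcyc] at this
    have h2 : (lam ^ n - 1) * a i₀ = 0 := by linear_combination -this
    rcases mul_eq_zero.mp h2 with h | h
    · exact sub_eq_zero.mp h
    · exact absurd h hi₀
  refine ⟨?_, n, hn1, hroot⟩
  classical
  -- orbit is periodic
  have hper : ∀ k, f^[k] i₀ = f^[k % n] i₀ := by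
    intro k
    have hk : k = k % n + n * (k / n) := (Nat.mod_add_div k n).symm
    conv_lhs => rw [hk]
    rw [Function.iterate_add_apply, Function.iterate_mul]
    rw [Function.iterate_fixed hcyc]
  set S : ℕ → Prop := fun j => ∃ k, f^[k] i₀ = j with hSdef
  set b' : ℕ → ℂ := fun j => if S j then a j else 0 with hbdef
  -- every orbit point has an orbit-point preimage
  have hpre : ∀ j, S j → ∃ i', S i' ∧ f i' = j := by
    rintro j ⟨k, rfl⟩
    cases k with
    | zero =>
      refine ⟨f^[n-1] i₀, ⟨n-1, rfl⟩, ?_⟩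
      have h5 : f^[n-1+1] i₀ = i₀ := by rw [show n - 1 + 1 = n by omega]; exact hcyc
      simpa [Function.iterate_succ_apply'] using h5
    | succ k => exact ⟨f^[k] i₀, ⟨k, rfl⟩, (Function.iterate_succ_apply' f k i₀).symm⟩
  have hSrange : ∀ j, S j → j ∈ Set.range f := by
    intro j hj
    obtain ⟨i', _, hfi'⟩ := hpre j hj
    exact ⟨i', hfi'⟩
  have hSf : ∀ i, S (f i) → S i := by
    intro i hfi
    obtain ⟨i', hSi', hfi'⟩ := hpre (f i) hfi
    rwa [← hfinj hfi']
  have hmem : Memℓp b' 1 := by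
    apply memℓp_gen
    apply summable_of_ne_finset_zero (s := (Finset.range n).image fun k => f^[k] i₀)
    intro j hj
    have hb0 : b' j = 0 := by
      rw [hbdef]
      simp only [ite_eq_right_iff]
      rintro ⟨k, rfl⟩
      exfalso
      apply hj
      simp only [Finset.mem_image, Finset.mem_range]
      exact ⟨k % n, Nat.mod_lt _ (by omega), (hper k).symm⟩
    simp [hb0]
  set b : lp (fun _ : ℕ => ℂ) 1 := ⟨b', hmem⟩ with hbdef2
  have hbcoe : ∀ j, b j = b' j := fun j => rfl
  have hbi₀ : b i₀ = a i₀ := by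
    rw [hbcoe, hbdef]
    exact if_pos (⟨0, rfl⟩ : S i₀)
  refine ⟨b, ?_, ?_, ?_⟩
  · intro h
    apply hi₀
    rw [← hbi₀, h]
    rfl
  · apply lp.ext
    funext j
    have hrhs : ((lam • b : lp (fun _ : ℕ => ℂ) 1) : ∀ _ : ℕ, ℂ) j = lam * b' j := by
      simp [lp.coeFn_smul, hbcoe]
    rw [hrhs]
    rcases Classical.em (j ∈ Set.range f) with ⟨i, rfl⟩ | hj
    · rw [keyA]
      rcases Classical.em (S i) with hSi | hSi
      · have hSfi : S (f i) := by
          obtain ⟨k, rfl⟩ := hSi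
          exact ⟨k + 1, Function.iterate_succ_apply' f k i₀⟩
        rw [hbcoe, hbdef]
        simp only [if_pos hSi, if_pos hSfi]
        exact E1 i
      · have hSfi : ¬ S (f i) := fun h => hSi (hSf i h)
        rw [hbcoe, hbdef]
        simp [if_neg hSi, if_neg hSfi]
    · rw [keyB b j hj]
      have : b' j = 0 := by
        rw [hbdef]
        simp only [ite_eq_right_iff]
        intro hSj
        exact absurd (hSrange j hSj) hj
      rw [this, mul_zero]
  · apply Set.Finite.subset (((Finset.range n).image fun k => f^[k] i₀).finite_toSet)
    intro j hj
    have : S j := by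
      by_contra h
      apply hj
      show b j = 0
      rw [hbcoe, hbdef]
      simp [if_neg h]
    obtain ⟨k, rfl⟩ := this
    simp only [Finset.coe_image, Set.mem_image, Finset.coe_range, Set.mem_Iio]
    exact ⟨k % n, Nat.mod_lt _ (by omega), (hper k).symm⟩
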